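/- Let G be a finite group and r a prime divisor of |G|. Let D be the subgroup of G containing O_r(G) such that D/O_r(G) = Φ(G/O_r(G)). Then D equals the intersection of all maximal subgroups of G whose index is coprime to r. -/

import Mathlib

open Subgroup Pointwise

/-- Second isomorphism index identity: if `X` is normal and `M ⊔ X = ⊤`, then
`[G : M] = [X : M ⊓ X]`. -/
private lemma aux_index {G : Type*} [Group G] [Finite G] (M X : Subgroup G) [X.Normal]
    (h : M ⊔ X = ⊤) : M.index = (M ⊓ X).relIndex X := by
  have h1 : (M ⊓ X).relIndex M * M.index = (M ⊓ X).index :=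
    Subgroup.relIndex_mul_index inf_le_left
  have h2 : (M ⊓ X).relIndex X * X.index = (M ⊓ X).index :=
    Subgroup.relIndex_mul_index inf_le_right
  have h3 : (M ⊓ X).relIndex M = X.index := by
    rw [inf_relIndex_left, ← relIndex_sup_right M X, h, relIndex_top_right]
  have hX : X.index ≠ 0 := Subgroup.index_ne_zero_of_finite
  have key : M.index * X.index = (M ⊓ X).relIndex X * X.index := by
    rw [h2, ← h1, h3, mul_comm]
  exact Nat.eq_of_mul_eq_mul_right (Nat.pos_of_ne_zero hX) key

/-- A normal `r`-subgroup is contained in every Sylow `r`-subgroup. -/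
private lemma aux_le_sylow {G : Type*} [Group G] [Finite G] {r : ℕ} [Fact r.Prime]
    {O : Subgroup G} [O.Normal] (hO : IsPGroup r ↥O) (S : Sylow r G) : O ≤ S := by
  obtain ⟨S0, hS0⟩ := hO.exists_le_sylow
  obtain ⟨g, hg⟩ := MulAction.exists_smul_eq G S0 S
  have h : O ≤ (g • S0 : Sylow r G) := by
    rw [Sylow.coe_subgroup_smul, ← Subgroup.Normal.conj_smul_eq_self g O]
    exact Subgroup.pointwise_smul_le_pointwise_smul_iff.mpr hS0
  rwa [hg] at h

/-- Theorem 3.7(ii): let `G` be a finite group, `r` a prime divisor of `|G|`, and let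
`O = O_r(G)` be the largest normal `r`-subgroup of `G`. Then the preimage `D` in `G` of
`Φ(G/O_r(G))` equals the intersection of all maximal subgroups of `G` of `r'`-index. -/
theorem stmt_8 {G : Type*} [Group G] [Finite G] (r : ℕ) (hr : r.Prime)
    (hdvd : r ∣ Nat.card G)
    (O : Subgroup G) [O.Normal] (hO : IsPGroup r ↥O)
    (hOmax : ∀ P : Subgroup G, P.Normal → IsPGroup r ↥P → P ≤ O) :
    (frattini (G ⧸ O)).comap (QuotientGroup.mk' O) =
      sInf {H : Subgroup G | IsCoatom H ∧ ¬ r ∣ H.index} := by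
  haveI : Fact r.Prime := ⟨hr⟩
  set S : Set (Subgroup G) := {H : Subgroup G | IsCoatom H ∧ ¬ r ∣ H.index} with hSdef
  set X : Subgroup G := sInf S with hXdef
  -- `O` is contained in every member of the family.
  have hOmem : ∀ H ∈ S, O ≤ H := by
    rintro H ⟨hHc, hHi⟩
    obtain ⟨T⟩ : Nonempty (Sylow r ↥H) := Sylow.nonempty
    have hpQ : IsPGroup r ↥((T : Subgroup ↥H).map H.subtype) := T.2.map H.subtype
    have hQi : ¬ r ∣ ((T : Subgroup ↥H).map H.subtype).index := by
      rw [Subgroup.index_map_subtype]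
      exact hr.not_dvd_mul T.not_dvd_index hHi
    have hOS : O ≤ hpQ.toSylow hQi := aux_le_sylow hO _
    calc O ≤ (hpQ.toSylow hQi : Subgroup G) := hOS
      _ = (T : Subgroup ↥H).map H.subtype := hpQ.toSylow_coe hQi
      _ ≤ H := map_subtype_le _
  have hOX : O ≤ X := le_sInf hOmem
  -- `X` is normal.
  haveI hXn : X.Normal := by
    constructor
    intro n hn g
    have hn' : ∀ H ∈ S, n ∈ H := Subgroup.mem_sInf.mp hn
    refine Subgroup.mem_sInf.mpr fun H hH => ?_
    have hH' : H.comap (MulAut.conj g).toMonoidHom ∈ S := by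
      constructor
      · exact ((MulAut.conj g).comapSubgroup.isCoatom_iff H).mpr hH.1
      · rw [Subgroup.index_comap,
          MonoidHom.range_eq_top_of_surjective _ (MulAut.conj g).surjective,
          relIndex_top_right]
        exact hH.2
    simpa using hn' _ hH'
  -- key coprimality: `r` does not divide `[X : O]`.
  have hcop : ¬ r ∣ O.relIndex X := by
    obtain ⟨P⟩ : Nonempty (Sylow r ↥X) := Sylow.nonempty
    have hP'p : IsPGroup r ↥((P : Subgroup ↥X).map X.subtype) := P.2.map X.subtype
    have hfr : normalizer (((P : Subgroup ↥X).map X.subtype : Subgroup G) : Set G) ⊔ X = ⊤ :=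
      Sylow.normalizer_sup_eq_top P
    have hP'X : (P : Subgroup ↥X).map X.subtype ≤ X := map_subtype_le _
    have h5 : ((P : Subgroup ↥X).map X.subtype).subgroupOf X = (P : Subgroup ↥X) :=
      Subgroup.comap_map_eq_self_of_injective X.subtype_injective _
    have hrel : ((P : Subgroup ↥X).map X.subtype).relIndex X = (P : Subgroup ↥X).index :=
      congrArg Subgroup.index h5
    have hnorm : normalizer (((P : Subgroup ↥X).map X.subtype : Subgroup G) : Set G) = ⊤ := by
      by_contra hne
      obtain ⟨Hc, hHc, hle⟩ :=
        (eq_top_or_exists_le_coatom (normalizer (((P : Subgroup ↥X).map X.subtype : Subgroup G) : Set G))).resolve_left hne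
      have hsup : Hc ⊔ X = ⊤ := top_le_iff.mp (hfr ▸ sup_le_sup_right hle X)
      have hP'H : (P : Subgroup ↥X).map X.subtype ≤ Hc := le_trans Subgroup.le_normalizer hle
      have hidx : ¬ r ∣ Hc.index := by
        rw [aux_index Hc X hsup]
        intro hd
        have hdd : (Hc ⊓ X).relIndex X ∣ ((P : Subgroup ↥X).map X.subtype).relIndex X :=
          Subgroup.relIndex_dvd_of_le_left X (le_inf hP'H hP'X)
        rw [hrel] at hdd
        exact P.not_dvd_index (hd.trans hdd)
      have hXH : X ≤ Hc := sInf_le ⟨hHc, hidx⟩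
      exact hHc.1 (by rw [← hsup, sup_of_le_left hXH])
    haveI : ((P : Subgroup ↥X).map X.subtype).Normal := Subgroup.normalizer_eq_top_iff.mp hnorm
    have hP'O : (P : Subgroup ↥X).map X.subtype ≤ O := hOmax _ this hP'p
    intro hd
    have hdd : O.relIndex X ∣ ((P : Subgroup ↥X).map X.subtype).relIndex X :=
      Subgroup.relIndex_dvd_of_le_left X hP'O
    rw [hrel] at hdd
    exact P.not_dvd_index (hd.trans hdd)
  -- Now prove the two inclusions.
  apply le_antisymm
  · refine le_sInf fun H hH => ?_
    have hOH : O ≤ H := hOmem H hH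
    have hcoat : IsCoatom (H.map (QuotientGroup.mk' O)) := by
      constructor
      · intro htop
        have h0 := congrArg (Subgroup.comap (QuotientGroup.mk' O)) htop
        rw [Subgroup.comap_map_eq, QuotientGroup.ker_mk', sup_of_le_left hOH,
          Subgroup.comap_top] at h0
        exact hH.1.1 h0
      · intro K hK
        have h1 : H ≤ Subgroup.comap (QuotientGroup.mk' O) K := by
          have := Subgroup.comap_mono (f := QuotientGroup.mk' O) hK.le
          rwa [Subgroup.comap_map_eq, QuotientGroup.ker_mk', sup_of_le_left hOH] at this
        have h2 : H ≠ Subgroup.comap (QuotientGroup.mk' O) K := by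
          intro h
          apply hK.ne
          rw [h, Subgroup.map_comap_eq_self_of_surjective (QuotientGroup.mk'_surjective O)]
        have h3 := hH.1.2 _ (lt_of_le_of_ne h1 h2)
        rw [← Subgroup.map_comap_eq_self_of_surjective (QuotientGroup.mk'_surjective O) K, h3]
        exact Subgroup.map_top_of_surjective _ (QuotientGroup.mk'_surjective O)
    have hfin := Subgroup.comap_mono (f := QuotientGroup.mk' O) (frattini_le_coatom hcoat)
    rwa [Subgroup.comap_map_eq, QuotientGroup.ker_mk', sup_of_le_left hOH] at hfin
  · rw [← Subgroup.map_le_iff_le_comap]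
    show Subgroup.map (QuotientGroup.mk' O) X ≤ frattini (G ⧸ O)
    rw [frattini, Order.radical]
    refine le_iInf₂ fun M' hM' => ?_
    have hOM : O ≤ Subgroup.comap (QuotientGroup.mk' O) M' := fun g hg => by
      have h0 : (QuotientGroup.mk' O) g = 1 := (QuotientGroup.eq_one_iff g).mpr hg
      simpa [Subgroup.mem_comap, h0] using M'.one_mem
    have hMcoat : IsCoatom (Subgroup.comap (QuotientGroup.mk' O) M') := by
      constructor
      · intro h
        apply hM'.1
        rw [← Subgroup.map_comap_eq_self_of_surjective (QuotientGroup.mk'_surjective O) M', h]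
        exact Subgroup.map_top_of_surjective _ (QuotientGroup.mk'_surjective O)
      · intro K hK
        have hOK : O ≤ K := le_trans hOM hK.le
        have h1 : M' ≤ Subgroup.map (QuotientGroup.mk' O) K := by
          conv_lhs => rw [← Subgroup.map_comap_eq_self_of_surjective
            (QuotientGroup.mk'_surjective O) M']
          exact Subgroup.map_mono hK.le
        have h2 : M' ≠ Subgroup.map (QuotientGroup.mk' O) K := by
          intro h
          apply hK.ne'
          have h0 := congrArg (Subgroup.comap (QuotientGroup.mk' O)) h
          rw [Subgroup.comap_map_eq, QuotientGroup.ker_mk', sup_of_le_left hOK] at h0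
          exact h0.symm
        have h3 := hM'.2 _ (lt_of_le_of_ne h1 h2)
        have h4 := congrArg (Subgroup.comap (QuotientGroup.mk' O)) h3
        rwa [Subgroup.comap_map_eq, QuotientGroup.ker_mk', sup_of_le_left hOK,
          Subgroup.comap_top] at h4
    have hXM : X ≤ Subgroup.comap (QuotientGroup.mk' O) M' := by
      by_contra hnle
      have hlt : Subgroup.comap (QuotientGroup.mk' O) M' <
          Subgroup.comap (QuotientGroup.mk' O) M' ⊔ X :=
        lt_of_le_of_ne le_sup_left (fun h => hnle (h ▸ le_sup_right))
      have hsup : Subgroup.comap (QuotientGroup.mk' O) M' ⊔ X = ⊤ := hMcoat.2 _ hlt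
      have hMidx : ¬ r ∣ (Subgroup.comap (QuotientGroup.mk' O) M').index := by
        rw [aux_index _ X hsup]
        intro hd
        exact hcop (hd.trans (Subgroup.relIndex_dvd_of_le_left X (le_inf hOM hOX)))
      exact hnle (sInf_le ⟨hMcoat, hMidx⟩)
    calc Subgroup.map (QuotientGroup.mk' O) X
        ≤ Subgroup.map (QuotientGroup.mk' O) (Subgroup.comap (QuotientGroup.mk' O) M') :=
          Subgroup.map_mono hXM
      _ = M' := Subgroup.map_comap_eq_self_of_surjective (QuotientGroup.mk'_surjective O) M'
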